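/- Let G be a group, N ◁ G an abelian normal subgroup, H ≤ G a subgroup with N_H = H ∩ N, and suppose [N : N_N(H)] < ∞ where N_N(H) = {n ∈ N : H^n = H}. Let (M_i) be a sequence of subgroups of N with H ≤ N_G(M_i) for all i, exhausting N (i.e., every element of N eventually lies in M_i). Then for every h ∈ H there exists a finite subset Φ_h ⊆ N such that for all sufficiently large i, [h, M_i] ⊆ Φ_h + (N_H ∩ M_i), where [h,m] = h⁻¹m⁻¹hm ∈ N. -/

import Mathlib

/-- Let `N ◁ G` be abelian, `H ≤ G` with `N_N(H) = N ⊓ N_G(H)` of finite index in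
`N`, and let `(M i)` be subgroups of `N`, normalized by `H`, exhausting `N`. Then
for every `h ∈ H` there is a finite subset `Φ_h ⊆ N` such that for all sufficiently
large `i`, `[h, M_i] ⊆ Φ_h + (N_H ∩ M_i)`: every commutator `[h,m] = h⁻¹m⁻¹hm` with
`m ∈ M i` is a product `φ * x` with `φ ∈ Φ_h` and `x ∈ H ⊓ N ⊓ M i`. -/
theorem commutators_in_exhausting_subgroups {G : Type*} [Group G]
    (N : Subgroup G) [N.Normal] (habel : ∀ a ∈ N, ∀ b ∈ N, a * b = b * a)
    (H : Subgroup G) (hfi : (Subgroup.normalizer (H : Set G)).relIndex N ≠ 0)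
    (M : ℕ → Subgroup G) (hMN : ∀ i, M i ≤ N)
    (hHM : ∀ i, H ≤ Subgroup.normalizer (M i : Set G))
    (hexh : ∀ n ∈ N, ∃ i₀ : ℕ, ∀ i ≥ i₀, n ∈ M i) :
    ∀ h ∈ H, ∃ Φ : Finset G, (Φ : Set G) ⊆ (N : Set G) ∧
      ∃ i₀ : ℕ, ∀ i ≥ i₀, ∀ m ∈ M i,
        ∃ φ ∈ Φ, ∃ x ∈ H ⊓ N ⊓ M i, h⁻¹ * m⁻¹ * h * m = φ * x := by
  intro h hh
  classical
  set K : Subgroup N := (Subgroup.normalizer (H : Set G)).subgroupOf N with hK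
  have hfin : Finite (N ⧸ K) := by
    have h1 : Nat.card (N ⧸ K) ≠ 0 := hfi
    exact (Nat.card_ne_zero.mp h1).2
  haveI := Fintype.ofFinite (N ⧸ K)
  set r : N ⧸ K → N := fun q => q.out with hr
  set g : N ⧸ K → G := fun q => h⁻¹ * ((r q : G))⁻¹ * h * (r q) with hg
  have hconjN : ∀ v : G, v ∈ N → h⁻¹ * v⁻¹ * h ∈ N := by
    intro v hv
    have := Subgroup.Normal.conj_mem ‹N.Normal› _ (N.inv_mem hv) h⁻¹
    simpa [mul_assoc] using this
  have hgN : ∀ q, g q ∈ N := by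
    intro q
    have : g q = (h⁻¹ * ((r q : G))⁻¹ * h) * (r q : G) := by rw [hg]
    rw [this]
    exact N.mul_mem (hconjN _ (r q).2) (r q).2
  refine ⟨Finset.image g Finset.univ, ?_, ?_⟩
  · intro x hx
    simp only [Finset.coe_image, Set.mem_image] at hx
    obtain ⟨q, -, rfl⟩ := hx
    exact hgN q
  · choose c hc using fun q : N ⧸ K => hexh (r q) (r q).2
    refine ⟨Finset.univ.sup c, fun i hi m hm => ?_⟩
    have hmN : m ∈ N := hMN i hm
    set q : N ⧸ K := QuotientGroup.mk ⟨m, hmN⟩ with hq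
    have hnMi : (r q : G) ∈ M i :=
      hc q i (le_trans (Finset.le_sup (Finset.mem_univ q)) hi)
    have hout : (QuotientGroup.mk (r q) : N ⧸ K) = q := QuotientGroup.out_eq' q
    have huK : (r q)⁻¹ * ⟨m, hmN⟩ ∈ K := by
      rw [← QuotientGroup.eq, hout, hq]
    set u : G := ((r q : G))⁻¹ * m with hu
    have huN : u ∈ N := N.mul_mem (N.inv_mem (r q).2) hmN
    have huMi : u ∈ M i := (M i).mul_mem ((M i).inv_mem hnMi) hm
    have hunorm : u ∈ Subgroup.normalizer (H : Set G) := Subgroup.mem_subgroupOf.mp huK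
    -- x = [h, u]
    have hxH : h⁻¹ * u⁻¹ * h * u ∈ H := by
      have h1 : u⁻¹ * h * u ∈ H := by
        have := (Subgroup.mem_normalizer_iff.mp ((Subgroup.normalizer (H : Set G)).inv_mem hunorm) h).mp hh
        simpa [mul_assoc] using this
      have := H.mul_mem (H.inv_mem hh) h1
      convert this using 1
      group
    have hxN : h⁻¹ * u⁻¹ * h * u ∈ N := by
      have := N.mul_mem (hconjN u huN) huN
      convert this using 1
    have hxMi : h⁻¹ * u⁻¹ * h * u ∈ M i := by
      have h1 : h⁻¹ * u⁻¹ * h ∈ M i := by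
        have := (Subgroup.mem_normalizer_iff.mp ((Subgroup.normalizer (M i : Set G)).inv_mem (hHM i hh)) u⁻¹).mp
          ((M i).inv_mem huMi)
        simpa [mul_assoc] using this
      have := (M i).mul_mem h1 huMi
      convert this using 1
    refine ⟨g q, Finset.mem_image_of_mem g (Finset.mem_univ q),
      h⁻¹ * u⁻¹ * h * u, ⟨⟨hxH, hxN⟩, hxMi⟩, ?_⟩
    have hm_eq : m = (r q : G) * u := by rw [hu]; group
    have hA'N : h⁻¹ * u⁻¹ * h ∈ N := hconjN u huN
    calc h⁻¹ * m⁻¹ * h * m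
        = (h⁻¹ * u⁻¹ * h) * g q * u := by rw [hm_eq, hg]; group
      _ = g q * (h⁻¹ * u⁻¹ * h) * u := by rw [habel _ hA'N _ (hgN q)]
      _ = g q * (h⁻¹ * u⁻¹ * h * u) := by group
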